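/- Let A be a 2×2 matrix with quaternion entries and let P be a 2×2 matrix with real entries, regarded as a quaternionic matrix via the inclusion ℝ ⊆ ℍ. Then q(A·P) = (det P)² · q(A); in particular q is invariant under the right action of SL(2,ℝ). -/

import Mathlib

/-- The quartic `q([[a,b],[c,d]]) = |a|²|d|² + |b|²|c|² − 2 Re(a c̄ d b̄)` of a `2 × 2`
quaternionic matrix. -/
noncomputable def quartic (A : Matrix (Fin 2) (Fin 2) (Quaternion ℝ)) : ℝ :=
  Quaternion.normSq (A 0 0) * Quaternion.normSq (A 1 1) +
    Quaternion.normSq (A 0 1) * Quaternion.normSq (A 1 0) -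
    2 * (A 0 0 * star (A 1 0) * A 1 1 * star (A 0 1)).re

open Quaternion in
/-- Auxiliary quartic form on the four entries. -/
private noncomputable def Q (a b c d : Quaternion ℝ) : ℝ :=
  Quaternion.normSq a * Quaternion.normSq d + Quaternion.normSq b * Quaternion.normSq c -
    2 * (a * star c * d * star b).re

private lemma Q_comp (a b c d : Quaternion ℝ) :
    Q a b c d = Quaternion.normSq a * Quaternion.normSq d +
      Quaternion.normSq b * Quaternion.normSq c -
      2 * (a * star c * d * star b).re := rfl

attribute [local simp] Quaternion.normSq_def' Quaternion.re_mul Quaternion.imI_mul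
  Quaternion.imJ_mul Quaternion.imK_mul Quaternion.re_add Quaternion.imI_add
  Quaternion.imJ_add Quaternion.imK_add Quaternion.re_smul Quaternion.imI_smul
  Quaternion.imJ_smul Quaternion.imK_smul smul_eq_mul

private lemma Qswap (a b c d : Quaternion ℝ) : Q b a d c = Q a b c d := by
  simp only [Q_comp, Quaternion.re_star, Quaternion.imI_star, Quaternion.imJ_star,
    Quaternion.imK_star]
  simp
  ring

private lemma Qsame (a c : Quaternion ℝ) (t : ℝ) : Q a (t • a) c (t • c) = 0 := by
  simp only [Q_comp, Quaternion.re_star, Quaternion.imI_star, Quaternion.imJ_star,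
    Quaternion.imK_star]
  simp
  ring

private lemma Qscale (a b c d : Quaternion ℝ) (α β : ℝ) :
    Q (α • a) (β • b) (α • c) (β • d) = α ^ 2 * β ^ 2 * Q a b c d := by
  simp only [Q_comp, Quaternion.re_star, Quaternion.imI_star, Quaternion.imJ_star,
    Quaternion.imK_star]
  simp
  ring

private lemma Qshear1 (a b c d : Quaternion ℝ) (t : ℝ) :
    Q a (b + t • a) c (d + t • c) = Q a b c d := by
  simp only [Q_comp, Quaternion.re_star, Quaternion.imI_star, Quaternion.imJ_star,
    Quaternion.imK_star]
  simp
  ring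

private lemma Qshear2 (a b c d : Quaternion ℝ) (t : ℝ) :
    Q (a + t • b) b (c + t • d) d = Q a b c d := by
  simp only [Q_comp, Quaternion.re_star, Quaternion.imI_star, Quaternion.imJ_star,
    Quaternion.imK_star]
  simp
  ring

private lemma Qdiag (b d : Quaternion ℝ) : Q b b d d = 0 := by
  simp only [Q_comp, Quaternion.re_star, Quaternion.imI_star, Quaternion.imJ_star,
    Quaternion.imK_star]
  simp
  ring

private lemma key_pos (a b c d : Quaternion ℝ) (p q r s : ℝ) (hp : p ≠ 0) :
    Q (p • a + r • b) (q • a + s • b) (p • c + r • d) (q • c + s • d) =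
      (p * s - q * r) ^ 2 * Q a b c d := by
  have e1 : q / p * p = q := div_mul_cancel₀ q hp
  have e2 : q / p * r + (s - q * r / p) = s := by field_simp; ring
  have h1 : ∀ x y : Quaternion ℝ,
      q • x + s • y = (s - q * r / p) • y + (q / p) • (p • x + r • y) := by
    intro x y
    rw [smul_add, smul_smul, smul_smul, e1, add_comm ((s - q * r / p) • y), add_assoc,
      ← add_smul, e2]
  have h2 : ∀ x y : Quaternion ℝ, p • x + r • y = p • (x + (r / p) • y) := by
    intro x y
    rw [smul_add, smul_smul]
    congr 2
    field_simp
  rw [h1 a b, h1 c d, Qshear1, h2 a b, h2 c d, Qscale, Qshear2]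
  have hm : p * (s - q * r / p) = p * s - q * r := by field_simp
  calc p ^ 2 * (s - q * r / p) ^ 2 * Q a b c d
      = (p * (s - q * r / p)) ^ 2 * Q a b c d := by ring
    _ = (p * s - q * r) ^ 2 * Q a b c d := by rw [hm]

private lemma key (a b c d : Quaternion ℝ) (p q r s : ℝ) :
    Q (p • a + r • b) (q • a + s • b) (p • c + r • d) (q • c + s • d) =
      (p * s - q * r) ^ 2 * Q a b c d := by
  by_cases hp : p ≠ 0
  · exact key_pos a b c d p q r s hp
  push_neg at hp
  subst hp
  simp only [zero_smul, zero_add, zero_mul, zero_sub]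
  by_cases hq : q ≠ 0
  · rw [← Qswap, show (r : ℝ) • b = (0:ℝ) • a + r • b by simp,
      show (r : ℝ) • d = (0:ℝ) • c + r • d by simp, key_pos a b c d q 0 s r hq]
    ring
  push_neg at hq
  subst hq
  simp only [zero_smul, zero_add, zero_mul, neg_zero]
  rw [Qscale, Qdiag]
  ring

private lemma quartic_eq_Q (A : Matrix (Fin 2) (Fin 2) (Quaternion ℝ)) :
    quartic A = Q (A 0 0) (A 0 1) (A 1 0) (A 1 1) := rfl

/-- For a `2 × 2` quaternionic matrix `A` and a real `2 × 2` matrix `P` (regarded as a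
quaternionic matrix via `ℝ ⊆ ℍ`), one has `q(A·P) = (det P)² · q(A)`; in particular `q`
is invariant under the right action of `SL(2,ℝ)`. -/
theorem quartic_mul_real (A : Matrix (Fin 2) (Fin 2) (Quaternion ℝ))
    (P : Matrix (Fin 2) (Fin 2) ℝ) :
    quartic (A * P.map (algebraMap ℝ (Quaternion ℝ))) = P.det ^ 2 * quartic A := by
  have h : ∀ i j, (A * P.map (algebraMap ℝ (Quaternion ℝ))) i j =
      P 0 j • A i 0 + P 1 j • A i 1 := by
    intro i j
    simp [Matrix.mul_apply, Fin.sum_univ_two, Matrix.map_apply, Quaternion.algebraMap_def,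
      Quaternion.mul_coe_eq_smul]
  rw [quartic_eq_Q, quartic_eq_Q, h, h, h, h, Matrix.det_fin_two]
  exact key (A 0 0) (A 0 1) (A 1 0) (A 1 1) (P 0 0) (P 0 1) (P 1 0) (P 1 1)
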